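/- Let σ and ν be finite positive Borel measures on ℝ, let (u_k) be a sequence of real numbers, and let c be a nonzero complex number. Assume that ξ_{u_k} → c·1 weakly in L²(ℝ, σ) and ξ_{u_k} → 0 weakly in L²(ℝ, ν). Then for every t ∈ ℝ, ξ_{u_k} → 0 weakly in L²(ℝ, ν * δ_t), and the measures σ and ν * δ_t are mutually singular. -/

import Mathlib

open MeasureTheory Filter Topology
open scoped ENNReal NNReal

/-- `ξ_s(x) = exp(2πisx)`. -/
noncomputable def xi (s x : ℝ) : ℂ := Complex.exp (2 * Real.pi * Complex.I * s * x)

/-- Weak convergence of a sequence to `g` in `L²(ℝ, ν)`. -/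
def WeakL2Tendsto (φ : ℕ → ℝ → ℂ) (g : ℝ → ℂ) (ν : Measure ℝ) : Prop :=
  ∀ f : ℝ → ℂ, MemLp f 2 ν →
    Tendsto (fun n => ∫ x, φ n x * (starRingEnd ℂ) (f x) ∂ν) atTop
      (𝓝 (∫ x, g x * (starRingEnd ℂ) (f x) ∂ν))

lemma xi_norm (s x : ℝ) : ‖xi s x‖ = 1 := by
  have : (2 * Real.pi * Complex.I * s * x) = ((2 * Real.pi * s * x : ℝ) : ℂ) * Complex.I := by
    push_cast; ring
  rw [xi, this]
  exact Complex.norm_exp_ofReal_mul_I _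

lemma xi_add (s x y : ℝ) : xi s (x + y) = xi s x * xi s y := by
  rw [xi, xi, xi, ← Complex.exp_add]
  congr 1
  push_cast
  ring

/-- Shifting the measure preserves weak `L²` convergence of the exponentials to `0`. -/
lemma weak_shift (ν : Measure ℝ) (u : ℕ → ℝ)
    (hν : WeakL2Tendsto (fun k x => xi (u k) x) (fun _ => 0) ν) (t : ℝ) :
    WeakL2Tendsto (fun k x => xi (u k) x) (fun _ => 0) (ν.map (fun x => x + t)) := by
  have hTemb : MeasurableEmbedding (fun x : ℝ => x + t) :=
    (Homeomorph.addRight t).measurableEmbedding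
  intro f hf
  have hg : MemLp (fun x => f (x + t)) 2 ν := hTemb.memLp_map_measure_iff.mp hf
  have key : ∀ k, ∫ x, xi (u k) x * (starRingEnd ℂ) (f x) ∂(ν.map (fun x => x + t))
      = xi (u k) t * ∫ x, xi (u k) x * (starRingEnd ℂ) (f (x + t)) ∂ν := by
    intro k
    rw [hTemb.integral_map, ← integral_const_mul]
    congr 1
    ext x
    rw [xi_add]
    ring
  have h0 : Tendsto (fun k => ∫ x, xi (u k) x * (starRingEnd ℂ) (f (x + t)) ∂ν) atTop (𝓝 0) := by
    simpa using hν _ hg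
  have h1 : Tendsto (fun k => xi (u k) t * ∫ x, xi (u k) x * (starRingEnd ℂ) (f (x + t)) ∂ν)
      atTop (𝓝 0) := by
    rw [tendsto_zero_iff_norm_tendsto_zero]
    simp only [norm_mul, xi_norm, one_mul]
    exact tendsto_zero_iff_norm_tendsto_zero.mp h0
  simp only [key, zero_mul, integral_zero]
  exact h1

/-- If the exponentials converge weakly to a nonzero constant in `L²(σ)` and to `0` in
`L²(μ)`, then `σ` and `μ` are mutually singular. -/
lemma weak_sing (σ μ : Measure ℝ) [IsFiniteMeasure σ] [IsFiniteMeasure μ]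
    (u : ℕ → ℝ) (c : ℂ) (hc : c ≠ 0)
    (hσ : WeakL2Tendsto (fun k x => xi (u k) x) (fun _ => c) σ)
    (hμ : WeakL2Tendsto (fun k x => xi (u k) x) (fun _ => 0) μ) :
    σ ⟂ₘ μ := by
  obtain ⟨S, hSm, hsp0, hμS⟩ := Measure.mutuallySingular_singularPart σ μ
  set w : ℝ → ℝ≥0∞ := σ.rnDeriv μ with hw
  have hwm : Measurable w := Measure.measurable_rnDeriv σ μ
  set A : ℕ → Set ℝ := fun n => S ∩ {x | w x ≤ n} with hA
  have hAm : ∀ n, MeasurableSet (A n) := fun n =>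
    hSm.inter (hwm measurableSet_Iic)
  have hspA : ∀ n, σ.singularPart μ (A n) = 0 := fun n =>
    measure_mono_null Set.inter_subset_left hsp0
  have hae : ∀ᵐ x ∂μ, w x < ∞ := Measure.rnDeriv_lt_top σ μ
  have hwd : μ.withDensity w = μ.withDensity (fun x => ((w x).toNNReal : ℝ≥0∞)) := by
    apply withDensity_congr_ae
    filter_upwards [hae] with x hx
    rw [ENNReal.coe_toNNReal hx.ne]
  have hAnull : ∀ n : ℕ, σ (A n) = 0 := by
    intro n
    set f : ℝ → ℂ := (A n).indicator (fun _ => (1 : ℂ)) with hf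
    have hfmem : MemLp f 2 σ :=
      memLp_indicator_const 2 (hAm n) 1 (Or.inr (measure_ne_top σ _))
    set g : ℝ → ℂ := (A n).indicator (fun x => ((w x).toReal : ℂ)) with hg
    have hgmem : MemLp g 2 μ := by
      refine MemLp.of_bound ?_ (n : ℝ) ?_
      · refine (Measurable.indicator ?_ (hAm n)).aestronglyMeasurable
        exact Complex.measurable_ofReal.comp hwm.ennreal_toReal
      · refine Eventually.of_forall fun x => ?_
        by_cases hx : x ∈ A n
        · rw [hg]
          simp only [Set.indicator_of_mem hx, Complex.norm_real, Real.norm_eq_abs]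
          rw [abs_of_nonneg ENNReal.toReal_nonneg]
          have hxle : w x ≤ (n : ℝ≥0∞) := hx.2
          calc (w x).toReal ≤ ((n : ℝ≥0∞)).toReal := ENNReal.toReal_mono (by simp) hxle
            _ = n := by simp
        · simp [hg, Set.indicator_of_notMem hx]
    have heq : ∀ k, ∫ x, xi (u k) x * (starRingEnd ℂ) (f x) ∂σ
        = ∫ x, xi (u k) x * (starRingEnd ℂ) (g x) ∂μ := by
      intro k
      have e1 : (fun x => xi (u k) x * (starRingEnd ℂ) (f x))
          = (A n).indicator (fun x => xi (u k) x) := by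
        ext x; by_cases hx : x ∈ A n <;> simp [hf, hx]
      have e2 : (fun x => xi (u k) x * (starRingEnd ℂ) (g x))
          = (A n).indicator (fun x => ((w x).toReal : ℂ) * xi (u k) x) := by
        ext x; by_cases hx : x ∈ A n <;> simp [hg, hx, Complex.conj_ofReal, mul_comm]
      rw [e1, e2, integral_indicator (hAm n), integral_indicator (hAm n)]
      have hres : σ.restrict (A n) = (μ.withDensity w).restrict (A n) := by
        conv_lhs => rw [Measure.haveLebesgueDecomposition_add σ μ]
        rw [Measure.restrict_add, Measure.restrict_eq_zero.mpr (hspA n), zero_add]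
      rw [hres, hwd, restrict_withDensity (hAm n),
        integral_withDensity_eq_integral_smul (hwm.ennreal_toNNReal) _]
      refine integral_congr_ae (Eventually.of_forall fun x => ?_)
      simp [NNReal.smul_def, Complex.real_smul, ENNReal.toReal, mul_comm]
    have lim1 : Tendsto (fun k => ∫ x, xi (u k) x * (starRingEnd ℂ) (f x) ∂σ) atTop
        (𝓝 (c * (σ (A n)).toReal)) := by
      have := hσ f hfmem
      have e3 : (fun x => c * (starRingEnd ℂ) (f x)) = (A n).indicator (fun _ => c) := by
        ext x; by_cases hx : x ∈ A n <;> simp [hf, hx]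
      rw [show ∫ x, c * (starRingEnd ℂ) (f x) ∂σ = c * (σ (A n)).toReal by
        rw [e3, integral_indicator_const _ (hAm n)]; simp [mul_comm, measureReal_def]] at this
      exact this
    have lim2 : Tendsto (fun k => ∫ x, xi (u k) x * (starRingEnd ℂ) (f x) ∂σ) atTop (𝓝 0) := by
      rw [funext heq]
      simpa using hμ g hgmem
    have hval : c * (σ (A n)).toReal = 0 := tendsto_nhds_unique lim1 lim2
    have : ((σ (A n)).toReal : ℂ) = 0 := by
      rcases mul_eq_zero.mp hval with h | h
      · exact absurd h hc
      · exact h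
    have h2 : (σ (A n)).toReal = 0 := by exact_mod_cast this
    exact (ENNReal.toReal_eq_zero_iff _).mp h2 |>.resolve_right (measure_ne_top σ _)
  have hSsub : S ⊆ (⋃ n, A n) ∪ (S ∩ {x | w x = ∞}) := by
    intro x hx
    by_cases hfin : w x = ∞
    · exact Or.inr ⟨hx, hfin⟩
    · obtain ⟨n, hn⟩ := ENNReal.exists_nat_gt hfin
      exact Or.inl (Set.mem_iUnion.mpr ⟨n, hx, hn.le⟩)
  have hμinf : μ {x | w x = ∞} = 0 := by
    rw [ae_iff] at hae
    convert hae using 2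
    ext x
    simp [lt_top_iff_ne_top]
  have hσinf : σ (S ∩ {x | w x = ∞}) = 0 := by
    have hmE : MeasurableSet (S ∩ {x | w x = ∞}) :=
      hSm.inter (hwm (measurableSet_singleton ∞))
    conv_lhs => rw [Measure.haveLebesgueDecomposition_add σ μ]
    rw [Measure.add_apply, measure_mono_null Set.inter_subset_left hsp0,
      withDensity_apply _ hmE, setLIntegral_measure_zero _ _
        (measure_mono_null Set.inter_subset_right hμinf), zero_add]
  have hσS : σ S = 0 := by
    refine measure_mono_null hSsub ?_
    refine le_antisymm ?_ zero_le
    calc σ ((⋃ n, A n) ∪ (S ∩ {x | w x = ∞}))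
        ≤ σ (⋃ n, A n) + σ (S ∩ {x | w x = ∞}) := measure_union_le _ _
      _ = 0 := by rw [measure_iUnion_null hAnull, hσinf, add_zero]
  exact ⟨S, hSm, hσS, hμS⟩

theorem statement18 (σ ν : Measure ℝ) [IsFiniteMeasure σ] [IsFiniteMeasure ν]
    (u : ℕ → ℝ) (c : ℂ) (hc : c ≠ 0)
    (hσ : WeakL2Tendsto (fun k x => xi (u k) x) (fun _ => c) σ)
    (hν : WeakL2Tendsto (fun k x => xi (u k) x) (fun _ => 0) ν) :
    ∀ t : ℝ,
      WeakL2Tendsto (fun k x => xi (u k) x) (fun _ => 0) (ν.map (fun x => x + t)) ∧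
      σ ⟂ₘ ν.map (fun x => x + t) := by
  intro t
  have hνt := weak_shift ν u hν t
  have hfin : IsFiniteMeasure (ν.map (fun x => x + t)) := by
    constructor
    rw [Measure.map_apply (measurable_add_const t) MeasurableSet.univ]
    exact lt_of_le_of_lt (measure_mono (Set.subset_univ _)) (measure_lt_top ν _)
  exact ⟨hνt, weak_sing σ _ u c hc hσ hνt⟩
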